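/- Let U ⊆ ℂⁿ = E₁ ⊕ E₂ be a k-dimensional subspace and π : ℂⁿ → ℂⁿ/U the quotient map. The image of the linear map End(E₁) × End(E₂) → Hom(U, ℂⁿ/U) sending (X,Y) to the composite of (X ⊕ Y)|_U with π equals the subspace {φ ∈ Hom(U, ℂⁿ/U) : φ(U ∩ E₁) ⊆ π(E₁) and φ(U ∩ E₂) ⊆ π(E₂)}. (This computes the tangent space at U to the GL(p)×GL(q)-orbit through U.) -/

import Mathlib

open Module


section Aux

open LinearMap

set_option maxHeartbeats 1000000
set_option synthInstance.maxHeartbeats 400000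

variable {K V : Type*} [Field K] [AddCommGroup V] [Module K V]

lemma my_exists_isCompl_le (p q : Submodule K V) (h : p ⊔ q = ⊤) :
    ∃ D : Submodule K V, D ≤ q ∧ IsCompl p D := by
  obtain ⟨D', hD'⟩ := Submodule.exists_isCompl ((p ⊓ q).comap q.subtype)
  refine ⟨D'.map q.subtype, Submodule.map_subtype_le _ _, ?_, ?_⟩
  · rw [Submodule.disjoint_def]
    rintro x hxp ⟨y, hy, rfl⟩
    have hmem : y ∈ (p ⊓ q).comap q.subtype := by
      simp only [Submodule.mem_comap, Submodule.mem_inf]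
      exact ⟨hxp, y.2⟩
    have := hD'.disjoint.le_bot ⟨hmem, hy⟩
    simpa using congrArg (q.subtype) (Submodule.mem_bot K |>.mp this)
  · rw [codisjoint_iff, eq_top_iff]
    intro z _
    obtain ⟨a, ha, b, hb, rfl⟩ := Submodule.mem_sup.mp (h ▸ Submodule.mem_top (x := z))
    obtain ⟨c, hc, d, hd, hcd⟩ := Submodule.mem_sup.mp
      (codisjoint_iff.mp hD'.codisjoint ▸ Submodule.mem_top (x := (⟨b, hb⟩ : q)))
    have hb' : b = (c : V) + (d : V) := by
      simpa using congrArg Subtype.val hcd.symm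
    rw [hb', ← add_assoc]
    exact Submodule.add_mem_sup (Submodule.add_mem _ ha ((Submodule.mem_comap.mp hc).1))
      ⟨(d:q), hd, rfl⟩

lemma my_isCompl_triple {A P C : Submodule K V} (hAP : Disjoint A P)
    (hC : IsCompl (A ⊔ P) C) : IsCompl A (P ⊔ C) := by
  constructor
  · rw [Submodule.disjoint_def]
    intro x hxA hxPC
    obtain ⟨y, hy, c, hc, rfl⟩ := Submodule.mem_sup.mp hxPC
    have hc0 : c = 0 := by
      have : c ∈ (A ⊔ P) ⊓ C := ⟨by
        have : c = (y + c) - y := by abel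
        rw [this]
        exact Submodule.sub_mem _ (Submodule.mem_sup_left hxA) (Submodule.mem_sup_right hy), hc⟩
      exact hC.disjoint.le_bot this
    rw [hc0, add_zero] at hxA ⊢
    exact hAP.le_bot ⟨hxA, hy⟩
  · rw [codisjoint_iff, ← sup_assoc]
    exact codisjoint_iff.mp hC.codisjoint

lemma my_main (E₁ E₂ U : Submodule K V) (hcompl : IsCompl E₁ E₂)
    (φ : U →ₗ[K] V ⧸ U)
    (hc1 : ∀ u : U, (u : V) ∈ E₁ → φ u ∈ Submodule.map U.mkQ E₁)
    (hc2 : ∀ u : U, (u : V) ∈ E₂ → φ u ∈ Submodule.map U.mkQ E₂) :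
    ∃ (X : E₁ →ₗ[K] E₁) (Y : E₂ →ₗ[K] E₂), ∀ u : U, φ u =
      U.mkQ ((X (E₁.linearProjOfIsCompl E₂ hcompl (u : V)) : V) +
             (Y (E₂.linearProjOfIsCompl E₁ hcompl.symm (u : V)) : V)) := by
  classical
  -- quotient images of E₁, E₂
  set pE₁ : Submodule K (V ⧸ U) := E₁.map U.mkQ with hpE₁
  set pE₂ : Submodule K (V ⧸ U) := E₂.map U.mkQ with hpE₂
  -- sections over the quotient images
  let r₁ : E₁ →ₗ[K] pE₁ :=
    LinearMap.codRestrict pE₁ (U.mkQ ∘ₗ E₁.subtype) (fun x => Submodule.mem_map_of_mem x.2)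
  have hr₁ : range r₁ = ⊤ := by
    rw [eq_top_iff]
    rintro ⟨z, hz⟩ -
    obtain ⟨x, hx, rfl⟩ := hz
    exact ⟨⟨x, hx⟩, rfl⟩
  obtain ⟨σ₁, hσ₁⟩ := r₁.exists_rightInverse_of_surjective hr₁
  have hσ₁' : ∀ z : pE₁, U.mkQ ((σ₁ z : E₁) : V) = (z : V ⧸ U) :=
    fun z => congrArg Subtype.val (LinearMap.ext_iff.mp hσ₁ z)
  let r₂ : E₂ →ₗ[K] pE₂ :=
    LinearMap.codRestrict pE₂ (U.mkQ ∘ₗ E₂.subtype) (fun x => Submodule.mem_map_of_mem x.2)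
  have hr₂ : range r₂ = ⊤ := by
    rw [eq_top_iff]
    rintro ⟨z, hz⟩ -
    obtain ⟨x, hx, rfl⟩ := hz
    exact ⟨⟨x, hx⟩, rfl⟩
  obtain ⟨σ₂, hσ₂⟩ := r₂.exists_rightInverse_of_surjective hr₂
  have hσ₂' : ∀ z : pE₂, U.mkQ ((σ₂ z : E₂) : V) = (z : V ⧸ U) :=
    fun z => congrArg Subtype.val (LinearMap.ext_iff.mp hσ₂ z)
  -- complement of pE₁ inside pE₂
  have hsup : pE₁ ⊔ pE₂ = ⊤ := by
    rw [hpE₁, hpE₂, ← Submodule.map_sup, codisjoint_iff.mp hcompl.codisjoint,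
      Submodule.map_top, Submodule.range_mkQ]
  obtain ⟨D, hDle, hD⟩ := my_exists_isCompl_le pE₁ pE₂ hsup
  let prQ₁ := pE₁.linearProjOfIsCompl D hD
  let prD := D.linearProjOfIsCompl pE₁ hD.symm
  have hQsum : ∀ z : V ⧸ U, ((prQ₁ z : V ⧸ U)) + (prD z : V ⧸ U) = z :=
    fun z => Submodule.projection_add_projection_eq_self hD z
  -- decomposition of U
  set A : Submodule K U := E₁.comap U.subtype with hA
  set B : Submodule K U := E₂.comap U.subtype with hB
  obtain ⟨W, hW⟩ := Submodule.exists_isCompl (A ⊔ B)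
  -- injections into E₁ and E₂
  let ιA : A →ₗ[K] E₁ := LinearMap.codRestrict E₁ (U.subtype ∘ₗ A.subtype) (fun a => a.2)
  have hιA : Function.Injective ιA := by
    intro a b hab
    have h := congrArg (Subtype.val : E₁ → V) hab
    exact Subtype.ext (Subtype.ext h)
  let eA := LinearEquiv.ofInjective ιA hιA
  have hcoeA : ∀ a : A, ((eA a : E₁)) = ιA a := fun a => rfl
  let ιB : B →ₗ[K] E₂ := LinearMap.codRestrict E₂ (U.subtype ∘ₗ B.subtype) (fun b => b.2)
  have hιB : Function.Injective ιB := by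
    intro a b hab
    have h := congrArg (Subtype.val : E₂ → V) hab
    exact Subtype.ext (Subtype.ext h)
  let eB := LinearEquiv.ofInjective ιB hιB
  have hcoeB : ∀ b : B, ((eB b : E₂)) = ιB b := fun b => rfl
  let ιW₁ : W →ₗ[K] E₁ := (E₁.linearProjOfIsCompl E₂ hcompl) ∘ₗ U.subtype ∘ₗ W.subtype
  have hιW₁ : Function.Injective ιW₁ := by
    rw [← LinearMap.ker_eq_bot, eq_bot_iff]
    intro w hw
    have hw' : ((w : U) : V) ∈ E₂ :=
      (Submodule.linearProjOfIsCompl_apply_eq_zero_iff hcompl).mp hw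
    have hmem : (w : U) ∈ A ⊔ B := Submodule.mem_sup_right hw'
    have := hW.disjoint.le_bot ⟨hmem, w.2⟩
    exact (Submodule.mem_bot _).mpr (Subtype.ext ((Submodule.mem_bot _).mp this))
  let eW₁ := LinearEquiv.ofInjective ιW₁ hιW₁
  have hcoeW₁ : ∀ w : W, ((eW₁ w : E₁)) = ιW₁ w := fun w => rfl
  let ιW₂ : W →ₗ[K] E₂ := (E₂.linearProjOfIsCompl E₁ hcompl.symm) ∘ₗ U.subtype ∘ₗ W.subtype
  have hιW₂ : Function.Injective ιW₂ := by
    rw [← LinearMap.ker_eq_bot, eq_bot_iff]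
    intro w hw
    have hw' : ((w : U) : V) ∈ E₁ :=
      (Submodule.linearProjOfIsCompl_apply_eq_zero_iff hcompl.symm).mp hw
    have hmem : (w : U) ∈ A ⊔ B := Submodule.mem_sup_left hw'
    have := hW.disjoint.le_bot ⟨hmem, w.2⟩
    exact (Submodule.mem_bot _).mpr (Subtype.ext ((Submodule.mem_bot _).mp this))
  let eW₂ := LinearEquiv.ofInjective ιW₂ hιW₂
  have hcoeW₂ : ∀ w : W, ((eW₂ w : E₂)) = ιW₂ w := fun w => rfl
  -- disjointness of the ranges
  have hA₁P₁ : Disjoint (range ιA) (range ιW₁) := by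
    rw [Submodule.disjoint_def]
    rintro x ⟨a, rfl⟩ ⟨w, hw⟩
    have hval : ((a : U) : V) = (E₁.linearProjOfIsCompl E₂ hcompl ((w : U) : V) : V) :=
      congrArg Subtype.val hw.symm
    have hsum := Submodule.projection_add_projection_eq_self hcompl ((w : U) : V)
    have hp2val : ((E₂.linearProjOfIsCompl E₁ hcompl.symm ((w : U) : V)) : V)
        = ((w : U) : V) - ((a : U) : V) := by
      rw [hval, eq_sub_iff_add_eq, add_comm]; exact hsum
    have hp2U : ((E₂.linearProjOfIsCompl E₁ hcompl.symm ((w : U) : V)) : V) ∈ U := by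
      rw [hp2val]; exact Submodule.sub_mem _ (w : U).2 (a : U).2
    have hbB : (⟨_, hp2U⟩ : U) ∈ B := (E₂.linearProjOfIsCompl E₁ hcompl.symm ((w : U) : V)).2
    have hwAB : (w : U) ∈ A ⊔ B := by
      have hdecomp : (w : U) = (a : U) + ⟨_, hp2U⟩ := by
        apply Subtype.ext
        show ((w : U) : V) = ((a : U) : V) + _
        rw [hval]
        exact hsum.symm
      rw [hdecomp]
      exact Submodule.add_mem _ (Submodule.mem_sup_left a.2) (Submodule.mem_sup_right hbB)
    have hw0 : (w : U) = 0 := (Submodule.mem_bot _).mp (hW.disjoint.le_bot ⟨hwAB, w.2⟩)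
    have : w = 0 := Subtype.ext hw0
    rw [← hw, this, map_zero]
  have hB₁P₂ : Disjoint (range ιB) (range ιW₂) := by
    rw [Submodule.disjoint_def]
    rintro x ⟨b, rfl⟩ ⟨w, hw⟩
    have hval : ((b : U) : V) = (E₂.linearProjOfIsCompl E₁ hcompl.symm ((w : U) : V) : V) :=
      congrArg Subtype.val hw.symm
    have hsum := Submodule.projection_add_projection_eq_self hcompl ((w : U) : V)
    have hp1val : ((E₁.linearProjOfIsCompl E₂ hcompl ((w : U) : V)) : V)
        = ((w : U) : V) - ((b : U) : V) := by
      rw [hval, eq_sub_iff_add_eq]; exact hsum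
    have hp1U : ((E₁.linearProjOfIsCompl E₂ hcompl ((w : U) : V)) : V) ∈ U := by
      rw [hp1val]; exact Submodule.sub_mem _ (w : U).2 (b : U).2
    have haA : (⟨_, hp1U⟩ : U) ∈ A := (E₁.linearProjOfIsCompl E₂ hcompl ((w : U) : V)).2
    have hwAB : (w : U) ∈ A ⊔ B := by
      have hdecomp : (w : U) = ⟨_, hp1U⟩ + (b : U) := by
        apply Subtype.ext
        show ((w : U) : V) = _ + ((b : U) : V)
        rw [hval]
        exact hsum.symm
      rw [hdecomp]
      exact Submodule.add_mem _ (Submodule.mem_sup_left haA) (Submodule.mem_sup_right b.2)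
    have hw0 : (w : U) = 0 := (Submodule.mem_bot _).mp (hW.disjoint.le_bot ⟨hwAB, w.2⟩)
    have : w = 0 := Subtype.ext hw0
    rw [← hw, this, map_zero]
  -- complements inside E₁ and E₂
  obtain ⟨C₁, hC₁⟩ := Submodule.exists_isCompl (range ιA ⊔ range ιW₁)
  have hcomplA₁ : IsCompl (range ιA) (range ιW₁ ⊔ C₁) := my_isCompl_triple hA₁P₁ hC₁
  have hcomplP₁ : IsCompl (range ιW₁) (range ιA ⊔ C₁) :=
    my_isCompl_triple hA₁P₁.symm (by rwa [sup_comm (range ιW₁)] )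
  obtain ⟨C₂, hC₂⟩ := Submodule.exists_isCompl (range ιB ⊔ range ιW₂)
  have hcomplB₁ : IsCompl (range ιB) (range ιW₂ ⊔ C₂) := my_isCompl_triple hB₁P₂ hC₂
  have hcomplP₂ : IsCompl (range ιW₂) (range ιB ⊔ C₂) :=
    my_isCompl_triple hB₁P₂.symm (by rwa [sup_comm (range ιW₂)] )
  -- building blocks
  let fA : A →ₗ[K] E₁ :=
    σ₁ ∘ₗ LinearMap.codRestrict pE₁ (φ ∘ₗ A.subtype) (fun a => hc1 (a : U) a.2)
  have hfA : ∀ a : A, U.mkQ ((fA a : E₁) : V) = φ (a : U) := fun a => hσ₁' _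
  let fB : B →ₗ[K] E₂ :=
    σ₂ ∘ₗ LinearMap.codRestrict pE₂ (φ ∘ₗ B.subtype) (fun b => hc2 (b : U) b.2)
  have hfB : ∀ b : B, U.mkQ ((fB b : E₂) : V) = φ (b : U) := fun b => hσ₂' _
  let fW₁ : W →ₗ[K] E₁ := σ₁ ∘ₗ prQ₁ ∘ₗ φ ∘ₗ W.subtype
  have hfW₁ : ∀ w : W, U.mkQ ((fW₁ w : E₁) : V) = ((prQ₁ (φ (w : U))) : V ⧸ U) :=
    fun w => hσ₁' _
  let fW₂ : W →ₗ[K] E₂ :=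
    σ₂ ∘ₗ LinearMap.codRestrict pE₂ (D.subtype ∘ₗ prD ∘ₗ φ ∘ₗ W.subtype)
      (fun w => hDle (prD (φ (w : U))).2)
  have hfW₂ : ∀ w : W, U.mkQ ((fW₂ w : E₂) : V) = ((prD (φ (w : U))) : V ⧸ U) :=
    fun w => hσ₂' _
  -- the endomorphisms
  let prA₁ := (range ιA).linearProjOfIsCompl (range ιW₁ ⊔ C₁) hcomplA₁
  let prP₁ := (range ιW₁).linearProjOfIsCompl (range ιA ⊔ C₁) hcomplP₁
  let prB₁ := (range ιB).linearProjOfIsCompl (range ιW₂ ⊔ C₂) hcomplB₁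
  let prP₂ := (range ιW₂).linearProjOfIsCompl (range ιB ⊔ C₂) hcomplP₂
  let X : E₁ →ₗ[K] E₁ := (fA ∘ₗ (eA.symm : _ →ₗ[K] _)) ∘ₗ prA₁ + (fW₁ ∘ₗ (eW₁.symm : _ →ₗ[K] _)) ∘ₗ prP₁
  let Y : E₂ →ₗ[K] E₂ := (fB ∘ₗ (eB.symm : _ →ₗ[K] _)) ∘ₗ prB₁ + (fW₂ ∘ₗ (eW₂.symm : _ →ₗ[K] _)) ∘ₗ prP₂
  have hXapp : ∀ e : E₁, X e = fA (eA.symm (prA₁ e)) + fW₁ (eW₁.symm (prP₁ e)) := fun e => rfl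
  have hYapp : ∀ e : E₂, Y e = fB (eB.symm (prB₁ e)) + fW₂ (eW₂.symm (prP₂ e)) := fun e => rfl
  refine ⟨X, Y, ?_⟩
  -- the linear map giving the right-hand side
  set ψ : U →ₗ[K] V ⧸ U := U.mkQ ∘ₗ
    (E₁.subtype ∘ₗ X ∘ₗ (E₁.linearProjOfIsCompl E₂ hcompl)
      + E₂.subtype ∘ₗ Y ∘ₗ (E₂.linearProjOfIsCompl E₁ hcompl.symm)) ∘ₗ U.subtype with hψdef
  have hψ : ∀ u : U, ψ u =
      U.mkQ ((X (E₁.linearProjOfIsCompl E₂ hcompl (u : V)) : V) +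
             (Y (E₂.linearProjOfIsCompl E₁ hcompl.symm (u : V)) : V)) := fun u => rfl
  suffices hmain : ∀ u : U, φ u = ψ u by
    intro u
    rw [hmain u, hψ u]
  -- key computation on A
  have keyA : ∀ u : U, (u : V) ∈ E₁ → φ u = ψ u := by
    intro u hu
    have hp2 : E₂.linearProjOfIsCompl E₁ hcompl.symm (u : V) = 0 :=
      Submodule.projectionOnto_apply_of_mem_right hcompl.symm hu
    have hp1 : E₁.linearProjOfIsCompl E₂ hcompl (u : V) = ιA ⟨u, hu⟩ :=
      Submodule.linearProjOfIsCompl_apply_left hcompl ⟨(u : V), hu⟩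
    have h1 : prA₁ (ιA ⟨u, hu⟩) = eA ⟨u, hu⟩ := by
      rw [← hcoeA ⟨u, hu⟩]
      exact Submodule.linearProjOfIsCompl_apply_left hcomplA₁ (eA ⟨u, hu⟩)
    have h2 : prP₁ (ιA ⟨u, hu⟩) = 0 :=
      Submodule.projectionOnto_apply_of_mem_right hcomplP₁
        (Submodule.mem_sup_left (LinearMap.mem_range_self ιA ⟨u, hu⟩))
    rw [hψ u, hp1, hp2, map_zero, hXapp, h1, h2, LinearEquiv.symm_apply_apply,
      map_zero, map_zero, add_zero]
    push_cast [add_zero]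
    exact (hfA ⟨u, hu⟩).symm
  -- key computation on B
  have keyB : ∀ u : U, (u : V) ∈ E₂ → φ u = ψ u := by
    intro u hu
    have hp1 : E₁.linearProjOfIsCompl E₂ hcompl (u : V) = 0 :=
      Submodule.projectionOnto_apply_of_mem_right hcompl hu
    have hp2 : E₂.linearProjOfIsCompl E₁ hcompl.symm (u : V) = ιB ⟨u, hu⟩ :=
      Submodule.linearProjOfIsCompl_apply_left hcompl.symm ⟨(u : V), hu⟩
    have h1 : prB₁ (ιB ⟨u, hu⟩) = eB ⟨u, hu⟩ := by
      rw [← hcoeB ⟨u, hu⟩]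
      exact Submodule.linearProjOfIsCompl_apply_left hcomplB₁ (eB ⟨u, hu⟩)
    have h2 : prP₂ (ιB ⟨u, hu⟩) = 0 :=
      Submodule.projectionOnto_apply_of_mem_right hcomplP₂
        (Submodule.mem_sup_left (LinearMap.mem_range_self ιB ⟨u, hu⟩))
    rw [hψ u, hp1, hp2, map_zero, hYapp, h1, h2, LinearEquiv.symm_apply_apply,
      map_zero, map_zero, add_zero]
    push_cast [zero_add]
    exact (hfB ⟨u, hu⟩).symm
  -- key computation on W
  have keyW : ∀ u : U, u ∈ W → φ u = ψ u := by
    intro u hu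
    have hp1 : E₁.linearProjOfIsCompl E₂ hcompl (u : V) = ιW₁ ⟨u, hu⟩ := rfl
    have hp2 : E₂.linearProjOfIsCompl E₁ hcompl.symm (u : V) = ιW₂ ⟨u, hu⟩ := rfl
    have h1 : prA₁ (ιW₁ ⟨u, hu⟩) = 0 :=
      Submodule.projectionOnto_apply_of_mem_right hcomplA₁
        (Submodule.mem_sup_left (LinearMap.mem_range_self ιW₁ ⟨u, hu⟩))
    have h2 : prP₁ (ιW₁ ⟨u, hu⟩) = eW₁ ⟨u, hu⟩ := by
      rw [← hcoeW₁ ⟨u, hu⟩]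
      exact Submodule.linearProjOfIsCompl_apply_left hcomplP₁ (eW₁ ⟨u, hu⟩)
    have h3 : prB₁ (ιW₂ ⟨u, hu⟩) = 0 :=
      Submodule.projectionOnto_apply_of_mem_right hcomplB₁
        (Submodule.mem_sup_left (LinearMap.mem_range_self ιW₂ ⟨u, hu⟩))
    have h4 : prP₂ (ιW₂ ⟨u, hu⟩) = eW₂ ⟨u, hu⟩ := by
      rw [← hcoeW₂ ⟨u, hu⟩]
      exact Submodule.linearProjOfIsCompl_apply_left hcomplP₂ (eW₂ ⟨u, hu⟩)
    rw [hψ u, hp1, hp2, hXapp, hYapp, h1, h2, h3, h4, map_zero, map_zero, map_zero,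
      map_zero, zero_add, zero_add, LinearEquiv.symm_apply_apply,
      LinearEquiv.symm_apply_apply, map_add, hfW₁, hfW₂]
    exact (hQsum (φ u)).symm
  -- conclude by linearity
  intro u
  have hu : u ∈ A ⊔ B ⊔ W := by
    rw [codisjoint_iff.mp hW.codisjoint]; trivial
  obtain ⟨ab, hab, w, hw, rfl⟩ := Submodule.mem_sup.mp hu
  obtain ⟨a, ha, b, hb, rfl⟩ := Submodule.mem_sup.mp hab
  rw [map_add, map_add, map_add, map_add, keyA a ha, keyB b hb, keyW w hw]

end Aux

set_option maxHeartbeats 1000000 in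
set_option synthInstance.maxHeartbeats 400000 in
/-- For a k-dimensional subspace `U ⊆ ℂⁿ = E₁ ⊕ E₂` with quotient map
`π : ℂⁿ → ℂⁿ/U`, the image of the map `End(E₁) × End(E₂) → Hom(U, ℂⁿ/U)`,
`(X,Y) ↦ π ∘ (X ⊕ Y)|_U`, equals
`{φ : φ(U ∩ E₁) ⊆ π(E₁) and φ(U ∩ E₂) ⊆ π(E₂)}`. -/
theorem tangent_space_orbit_GLp_GLq (p q k n : ℕ) (hp : 0 < p) (hq : 0 < q) (hk : 0 < k)
    (hpq : p + q = n) (hkn : k ≤ n)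
    (E₁ E₂ : Submodule ℂ (Fin n → ℂ)) (hcompl : IsCompl E₁ E₂)
    (hE₁ : finrank ℂ E₁ = p) (hE₂ : finrank ℂ E₂ = q)
    (U : Submodule ℂ (Fin n → ℂ)) (hU : finrank ℂ U = k) :
    {φ : U →ₗ[ℂ] ((Fin n → ℂ) ⧸ U) | ∃ (X : E₁ →ₗ[ℂ] E₁) (Y : E₂ →ₗ[ℂ] E₂),
        ∀ u : U, φ u =
          U.mkQ ((X (E₁.linearProjOfIsCompl E₂ hcompl (u : Fin n → ℂ)) : Fin n → ℂ) +
                 (Y (E₂.linearProjOfIsCompl E₁ hcompl.symm (u : Fin n → ℂ)) : Fin n → ℂ))} =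
    {φ : U →ₗ[ℂ] ((Fin n → ℂ) ⧸ U) |
        (∀ u : U, (u : Fin n → ℂ) ∈ E₁ → φ u ∈ Submodule.map U.mkQ E₁) ∧
        (∀ u : U, (u : Fin n → ℂ) ∈ E₂ → φ u ∈ Submodule.map U.mkQ E₂)} := by
  ext φ
  simp only [Set.mem_setOf_eq]
  constructor
  · rintro ⟨X, Y, hXY⟩
    constructor <;> intro u hu
    · rw [hXY u, show E₂.linearProjOfIsCompl E₁ hcompl.symm (u : Fin n → ℂ) = 0 from
        Submodule.projectionOnto_apply_of_mem_right hcompl.symm hu, map_zero]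
      simp only [ZeroMemClass.coe_zero, add_zero]
      exact Submodule.mem_map_of_mem (X _).2
    · rw [hXY u, show E₁.linearProjOfIsCompl E₂ hcompl (u : Fin n → ℂ) = 0 from
        Submodule.projectionOnto_apply_of_mem_right hcompl hu, map_zero]
      simp only [ZeroMemClass.coe_zero, zero_add]
      exact Submodule.mem_map_of_mem (Y _).2
  · rintro ⟨h1, h2⟩
    exact my_main E₁ E₂ U hcompl φ h1 h2
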